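/- Let R = ℤ[t,t⁻¹], S₁ = [[-t, 1], [0, 1]] and S₂⁻¹ = [[1, 0], [1, -t⁻¹]]. Let (p_1,q_1),…,(p_s,q_s) be a nonempty list of pairs of positive integers, and let M = S₁^{p_1}·(S₂⁻¹)^{q_1}·S₁^{p_2}·(S₂⁻¹)^{q_2}⋯S₁^{p_s}·(S₂⁻¹)^{q_s}. Then every entry of M is sign-coherent: for each of the four entries f of M and every integer i, (-1)^i times the coefficient of t^i in f is nonnegative. -/

import Mathlib

open LaurentPolynomial

/-- The image of the braid generator `σ₁` of `B₃` under the reduced Burau representation: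
the matrix `[[-t, 1], [0, 1]]` over `ℤ[t,t⁻¹]`. -/
noncomputable def S₁ : Matrix (Fin 2) (Fin 2) (LaurentPolynomial ℤ) :=
  !![-T 1, 1; 0, 1]

/-- The matrix `[[1, 0], [1, -t⁻¹]]` over `ℤ[t,t⁻¹]`, the image of `σ₂⁻¹` under the
reduced Burau representation. -/
noncomputable def S₂inv : Matrix (Fin 2) (Fin 2) (LaurentPolynomial ℤ) :=
  !![1, 0; 1, -T (-1)]


def SC (f : LaurentPolynomial ℤ) : Prop := ∀ k : ℤ, 0 ≤ (Int.negOnePow k : ℤ) * f.coeff k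

lemma SC_zero : SC 0 := fun k => by simp [SC]

lemma SC_one : SC 1 := by
  intro k
  have : (1 : LaurentPolynomial ℤ).coeff k = if (0:ℤ) = k then 1 else 0 := by
    simpa using T_apply (R := ℤ) k 0
  rw [this]
  rcases eq_or_ne (0:ℤ) k with h | h
  · simp [← h]
  · simp [h]

lemma SC_add {f g : LaurentPolynomial ℤ} (hf : SC f) (hg : SC g) : SC (f + g) := by
  intro k
  have : (f + g).coeff k = f.coeff k + g.coeff k := rfl
  rw [this, mul_add]
  exact add_nonneg (hf k) (hg k)

lemma SC_mul {f g : LaurentPolynomial ℤ} (hf : SC f) (hg : SC g) : SC (f * g) := by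
  intro k
  rw [AddMonoidAlgebra.mul_apply]
  rw [Finsupp.sum, Finset.mul_sum]
  apply Finset.sum_nonneg
  intro a _
  rw [Finsupp.sum, Finset.mul_sum]
  apply Finset.sum_nonneg
  intro b _
  by_cases h : a + b = k
  · rw [if_pos h, ← h, Int.negOnePow_add]
    push_cast
    have := mul_nonneg (hf a) (hg b)
    nlinarith [this]
  · rw [if_neg h, mul_zero]

lemma SC_negT (n : ℤ) (hn : Odd n) : SC (-T n) := by
  intro k
  have : (T n : LaurentPolynomial ℤ).coeff k = if n = k then 1 else 0 :=
    T_apply k n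
  have h2 : ((-T n : LaurentPolynomial ℤ)).coeff k = -(if n = k then 1 else 0) := by
    rw [← this]; rfl
  rw [h2]
  rcases eq_or_ne n k with h | h
  · rw [if_pos h, ← h, Int.negOnePow_odd _ hn]; simp
  · simp [h]

def MatSC (M : Matrix (Fin 2) (Fin 2) (LaurentPolynomial ℤ)) : Prop := ∀ i j, SC (M i j)

lemma MatSC_one : MatSC 1 := by
  intro i j
  by_cases h : i = j
  · simpa [Matrix.one_apply, h] using SC_one
  · simpa [Matrix.one_apply, h] using SC_zero

lemma MatSC_mul {A B} (hA : MatSC A) (hB : MatSC B) : MatSC (A * B) := by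
  intro i j
  rw [Matrix.mul_apply]
  have : SC (∑ k : Fin 2, A i k * B k j) := by
    apply Finset.sum_induction _ SC (fun a b => SC_add) SC_zero
    intro k _
    exact SC_mul (hA i k) (hB k j)
  exact this

lemma MatSC_pow {A} (hA : MatSC A) (n : ℕ) : MatSC (A ^ n) := by
  induction n with
  | zero => simpa using MatSC_one
  | succ n ih => rw [pow_succ]; exact MatSC_mul ih hA

lemma MatSC_S₁ : MatSC S₁ := by
  intro i j
  fin_cases i <;> fin_cases j <;> simp [S₁]
  · exact SC_negT 1 ⟨0, by ring⟩
  · exact SC_one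
  · exact SC_zero
  · exact SC_one

lemma MatSC_S₂inv : MatSC S₂inv := by
  intro i j
  fin_cases i <;> fin_cases j <;> simp [S₂inv]
  · exact SC_one
  · exact SC_zero
  · exact SC_one
  · exact SC_negT (-1) ⟨-1, by ring⟩

/-- For a nonempty list `(p₁,q₁), …, (p_s,q_s)` of pairs of positive integers, every entry
of the Burau matrix `M = S₁^{p₁}·S₂inv^{q₁} ⋯ S₁^{p_s}·S₂inv^{q_s}` of the 3-braid
`σ₁^{p₁}σ₂^{-q₁}⋯σ₁^{p_s}σ₂^{-q_s}` is sign-coherent: `(-1)^k` times the coefficient of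
`t^k` is nonnegative, for every integer `k`. -/
theorem burau_word_entries_signCoherent (pq : List (ℕ × ℕ)) (hne : pq ≠ [])
    (hpos : ∀ x ∈ pq, 0 < x.1 ∧ 0 < x.2) :
    ∀ i j : Fin 2, ∀ k : ℤ,
      0 ≤ (Int.negOnePow k : ℤ) *
        ((pq.map fun x => S₁ ^ x.1 * S₂inv ^ x.2).prod i j).coeff k := by
  have : MatSC ((pq.map fun x => S₁ ^ x.1 * S₂inv ^ x.2).prod) := by
    clear hne hpos
    induction pq with
    | nil => simpa using MatSC_one
    | cons hd tl ih =>
      rw [List.map_cons, List.prod_cons]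
      exact MatSC_mul (MatSC_mul (MatSC_pow MatSC_S₁ _) (MatSC_pow MatSC_S₂inv _)) ih
  exact fun i j k => this i j k
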